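/- arXiv:2004.03477 — 2 statements merged into one kernel-verified Lean document; each statement's English description precedes it below -/
import Mathlib

section
/- (Proposition 1, soundness direction.) Let reach be the least relation on V × (Σ ∪ N)* × V closed under: (i) reach(x, ε, x) for every vertex x; (ii) reach(x, p, y) whenever p ∈ Σ and (x, p, y) ∈ D; (iii) reach(x, A, y) whenever A ∈ N, (A → α) ∈ P, and reach(x, α, y); (iv) reach(x, α₁α₂, y) whenever there is a vertex w with reach(x, α₁, w) and reach(w, α₂, y). Then for all vertices x, y and every string α over Σ ∪ N: if reach(x, α, y), then there exists a terminal string s ∈ Σ* such that α ⇒* s and s ∈ traces(paths(x, y)). -/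
/-- `HasTrace D x s y` : `s` is the trace of some path in the data graph `D` from `x` to `y`. -/
inductive HasTrace {V E : Type*} (D : Set (V × E × V)) : V → List E → V → Prop
  | nil (x : V) : HasTrace D x [] x
  | cons {x y z : V} {p : E} {s : List E} :
      (x, p, y) ∈ D → HasTrace D y s z → HasTrace D x (p :: s) z


/-- The least relation `reach` of Proposition 1. -/
inductive Reach {T V : Type*} (g : ContextFreeGrammar T) (D : Set (V × T × V)) :
    V → List (Symbol T g.NT) → V → Prop
  | eps (x : V) : Reach g D x [] x
  | term {x y : V} {p : T} : (x, p, y) ∈ D → Reach g D x [Symbol.terminal p] y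
  | nonterm {x y : V} {r : ContextFreeRule T g.NT} :
      r ∈ g.rules → Reach g D x r.output y → Reach g D x [Symbol.nonterminal r.input] y
  | concat {x w y : V} {α₁ α₂ : List (Symbol T g.NT)} :
      Reach g D x α₁ w → Reach g D w α₂ y → Reach g D x (α₁ ++ α₂) y

lemma hasTrace_append {V E : Type*} {D : Set (V × E × V)} {x y z : V} {s t : List E}
    (h1 : HasTrace D x s y) (h2 : HasTrace D y t z) : HasTrace D x (s ++ t) z := by
  induction h1 with
  | nil => simpa
  | cons hd _ ih => exact HasTrace.cons hd (ih h2)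

theorem reach_sound {T V : Type*} (g : ContextFreeGrammar T) (D : Set (V × T × V)) :
    ∀ (x y : V) (α : List (Symbol T g.NT)),
      Reach g D x α y →
        ∃ s : List T, g.Derives α (s.map Symbol.terminal) ∧ HasTrace D x s y := by
  intro x y α h
  induction h with
  | eps x => exact ⟨[], ContextFreeGrammar.Derives.refl _, HasTrace.nil x⟩
  | term hd =>
      exact ⟨[_], ContextFreeGrammar.Derives.refl _, HasTrace.cons hd (HasTrace.nil _)⟩
  | nonterm hr _ ih =>
      obtain ⟨s, hder, htr⟩ := ih
      exact ⟨s, (ContextFreeGrammar.Produces.single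
        ⟨_, hr, ContextFreeRule.Rewrites.input_output⟩).trans hder, htr⟩
  | concat _ _ ih1 ih2 =>
      obtain ⟨s1, hd1, ht1⟩ := ih1
      obtain ⟨s2, hd2, ht2⟩ := ih2
      refine ⟨s1 ++ s2, ?_, hasTrace_append ht1 ht2⟩
      rw [List.map_append]
      exact (hd1.append_right _).trans (hd2.append_left _)
end

section
/- (Correctness of the query semantics, semantic form of Proposition 3.) Let D be a data graph, G = (N, Σ, P, S) a context-free grammar, x a vertex, and A ∈ N. Let reach be the least relation on V × (Σ ∪ N)* × V closed under: (i) reach(z, ε, z); (ii) reach(z, p, y) whenever p ∈ Σ and (z, p, y) ∈ D; (iii) reach(z, B, y) whenever B ∈ N, (B → α) ∈ P, and reach(z, α, y); (iv) reach(z, α₁α₂, y) whenever there is w with reach(z, α₁, w) and reach(w, α₂, y). Then the evaluation of the query pair (x, A), defined as Eval = { y | ∃ s ∈ Σ*, A ⇒* s and s ∈ traces(paths(x, y)) }, satisfies Eval = { y | reach(x, A, y) }. -/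
lemma HasTrace.append {V E : Type*} {D : Set (V × E × V)} {x w y : V} {s t : List E}
    (h1 : HasTrace D x s w) (h2 : HasTrace D w t y) : HasTrace D x (s ++ t) y := by
  induction h1 with
  | nil => exact h2
  | cons he _ ih => exact HasTrace.cons he (ih h2)

lemma Reach.split {T V : Type*} {g : ContextFreeGrammar T} {D : Set (V × T × V)}
    {x y : V} {γ : List (Symbol T g.NT)} (h : Reach g D x γ y) :
    ∀ α₁ α₂, γ = α₁ ++ α₂ → ∃ w, Reach g D x α₁ w ∧ Reach g D w α₂ y := by
  induction h with
  | eps z =>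
    intro α₁ α₂ he
    obtain ⟨h1, h2⟩ := List.append_eq_nil_iff.mp he.symm
    exact ⟨z, by rw [h1]; exact Reach.eps z, by rw [h2]; exact Reach.eps z⟩
  | @term x y p hm =>
    intro α₁ α₂ he
    rcases α₁ with _ | ⟨a, α₁⟩
    · rw [List.nil_append] at he; subst he
      exact ⟨x, Reach.eps x, Reach.term hm⟩
    · simp only [List.cons_append, List.cons.injEq] at he
      obtain ⟨rfl, he⟩ := he
      obtain ⟨h1, h2⟩ := List.append_eq_nil_iff.mp he.symm
      subst h1; subst h2
      exact ⟨y, Reach.term hm, Reach.eps y⟩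
  | @nonterm x y r hm hr _ =>
    intro α₁ α₂ he
    rcases α₁ with _ | ⟨a, α₁⟩
    · rw [List.nil_append] at he; subst he
      exact ⟨x, Reach.eps x, Reach.nonterm hm hr⟩
    · simp only [List.cons_append, List.cons.injEq] at he
      obtain ⟨rfl, he⟩ := he
      obtain ⟨h1, h2⟩ := List.append_eq_nil_iff.mp he.symm
      subst h1; subst h2
      exact ⟨y, Reach.nonterm hm hr, Reach.eps y⟩
  | @concat x w y β₁ β₂ h1 h2 ih1 ih2 =>
    intro α₁ α₂ he
    rcases List.append_eq_append_iff.mp he.symm with ⟨c, rfl, rfl⟩ | ⟨c, rfl, rfl⟩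
    · obtain ⟨u, hu1, hu2⟩ := ih1 α₁ c rfl
      exact ⟨u, hu1, Reach.concat hu2 h2⟩
    · obtain ⟨u, hu1, hu2⟩ := ih2 c α₂ rfl
      exact ⟨u, Reach.concat h1 hu1, hu2⟩

lemma Reach.of_produces {T V : Type*} {g : ContextFreeGrammar T} {D : Set (V × T × V)}
    {x y : V} {α β : List (Symbol T g.NT)} (hp : g.Produces α β) (h : Reach g D x β y) :
    Reach g D x α y := by
  obtain ⟨r, hr, hrw⟩ := hp
  obtain ⟨p, q, rfl, rfl⟩ := hrw.exists_parts
  obtain ⟨u, hu1, hu2⟩ := h.split (p ++ r.output) q rfl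
  obtain ⟨v, hv1, hv2⟩ := hu1.split p r.output rfl
  exact Reach.concat (Reach.concat hv1 (Reach.nonterm hr hv2)) hu2

lemma Reach.of_derives {T V : Type*} {g : ContextFreeGrammar T} {D : Set (V × T × V)}
    {x y : V} {α β : List (Symbol T g.NT)} (hd : g.Derives α β) (h : Reach g D x β y) :
    Reach g D x α y := by
  induction hd using Relation.ReflTransGen.head_induction_on with
  | refl => exact h
  | head hp _ ih => exact Reach.of_produces hp ih

lemma Reach.of_hasTrace {T V : Type*} {g : ContextFreeGrammar T} {D : Set (V × T × V)}
    {x y : V} {s : List T} (h : HasTrace D x s y) :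
    Reach g D x (s.map Symbol.terminal) y := by
  induction h with
  | nil z => exact Reach.eps z
  | cons he _ ih => exact Reach.concat (Reach.term he) ih

lemma Reach.to_eval {T V : Type*} {g : ContextFreeGrammar T} {D : Set (V × T × V)}
    {x y : V} {α : List (Symbol T g.NT)} (h : Reach g D x α y) :
    ∃ s : List T, g.Derives α (s.map Symbol.terminal) ∧ HasTrace D x s y := by
  induction h with
  | eps z => exact ⟨[], ContextFreeGrammar.Derives.refl _, HasTrace.nil z⟩
  | @term x y p hm =>
    exact ⟨[p], ContextFreeGrammar.Derives.refl _, HasTrace.cons hm (HasTrace.nil y)⟩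
  | @nonterm x y r hm _ ih =>
    obtain ⟨s, hd, ht⟩ := ih
    exact ⟨s, (ContextFreeGrammar.Produces.single
      ⟨r, hm, ContextFreeRule.Rewrites.input_output⟩).trans hd, ht⟩
  | concat _ _ ih1 ih2 =>
    obtain ⟨s₁, hd₁, ht₁⟩ := ih1
    obtain ⟨s₂, hd₂, ht₂⟩ := ih2
    refine ⟨s₁ ++ s₂, ?_, ht₁.append ht₂⟩
    rw [List.map_append]
    exact (hd₁.append_right _).trans (hd₂.append_left _)

theorem eval_eq_reach {T V : Type*} (g : ContextFreeGrammar T) (D : Set (V × T × V))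
    (x : V) (A : g.NT) :
    {y : V | ∃ s : List T,
        g.Derives [Symbol.nonterminal A] (s.map Symbol.terminal) ∧ HasTrace D x s y} =
      {y : V | Reach g D x [Symbol.nonterminal A] y} := by
  ext y
  constructor
  · rintro ⟨s, hd, ht⟩
    exact Reach.of_derives hd (Reach.of_hasTrace ht)
  · exact fun h => h.to_eval
end
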